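/- For every n ≥ 2, p_n(1221, 1232) = p_n(1221, 1223) = 1 + (n−1)·2^{n−2}. -/
import Mathlib

/-- A restricted growth function (canonical sequential form of a set partition):
a word over the positive integers whose first letter is 1 and where each letter
is at most one more than the maximum of the preceding letters. -/
def IsRGF (w : List ℕ) : Prop :=
  (∀ x ∈ w, 1 ≤ x) ∧
  (w ≠ [] → w.getD 0 0 = 1) ∧
  ∀ i, i + 1 < w.length → w.getD (i + 1) 0 ≤ ((w.take (i + 1)).foldr max 0) + 1

/-- Two words of the same length are order-isomorphic: corresponding entries
compare the same way (this preserves equalities as well). -/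
def WordOrdIso (s t : List ℕ) : Prop :=
  s.length = t.length ∧
  ∀ i j, i < s.length → j < s.length →
    (s.getD i 0 < s.getD j 0 ↔ t.getD i 0 < t.getD j 0)

/-- `w` contains the pattern `p`: a subsequence of `w` is order-isomorphic to `p`. -/
def PatContains (w p : List ℕ) : Prop := ∃ s : List ℕ, s.Sublist w ∧ WordOrdIso s p

/-- `w` avoids the pattern `p`. -/
def PatAvoids (w p : List ℕ) : Prop := ¬ PatContains w p

/-- `pCount n T` = number of RGFs of length `n` avoiding every pattern in `T`. -/
noncomputable def pCount (n : ℕ) (T : Set (List ℕ)) : ℕ :=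
  {w : List ℕ | IsRGF w ∧ w.length = n ∧ ∀ p ∈ T, PatAvoids w p}.ncard


def RGFAux : ℕ → List ℕ → Prop
  | _, [] => True
  | m, x :: t => 1 ≤ x ∧ x ≤ m + 1 ∧ RGFAux (max m x) t

lemma foldr_max_init (l : List ℕ) (a b : ℕ) :
    l.foldr max (max a b) = max b (l.foldr max a) := by
  induction l with
  | nil => simp [Nat.max_comm]
  | cons x t ih => simp only [List.foldr_cons, ih]; omega

lemma RGFAux.one_le {m : ℕ} {w : List ℕ} (h : RGFAux m w) : ∀ x ∈ w, 1 ≤ x := by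
  induction w generalizing m with
  | nil => simp
  | cons y t ih =>
    obtain ⟨h1, _, h3⟩ := h
    intro x hx
    rcases List.mem_cons.1 hx with rfl | hx
    · exact h1
    · exact ih h3 x hx

lemma RGFAux.append_right {u t : List ℕ} {m : ℕ} (h : RGFAux m (u ++ t)) :
    RGFAux (u.foldr max m) t := by
  induction u generalizing m with
  | nil => exact h
  | cons x u ih =>
    obtain ⟨_, _, h3⟩ := h
    have := ih h3
    rw [foldr_max_init] at this
    simpa using this

lemma RGFAux.mem_of_le {u : List ℕ} {m v : ℕ} (h : RGFAux m u) (h1 : m < v)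
    (h2 : v ≤ u.foldr max m) : v ∈ u := by
  induction u generalizing m with
  | nil => simp at h2; omega
  | cons x t ih =>
    obtain ⟨hx1, hx2, hx3⟩ := h
    by_cases hvx : v = x
    · simp [hvx]
    · have hxv : x < v := by
        simp only [List.foldr_cons] at h2
        rcases Nat.lt_or_ge x v with h' | h'
        · exact h'
        · omega
      right
      apply ih hx3 (by omega)
      rw [foldr_max_init]
      simp only [List.foldr_cons] at h2
      omega

lemma rgfAux_iff (m : ℕ) (w : List ℕ) :
    RGFAux m w ↔ (∀ x ∈ w, 1 ≤ x) ∧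
      ∀ i, i < w.length → w.getD i 0 ≤ (w.take i).foldr max m + 1 := by
  induction w generalizing m with
  | nil => simp [RGFAux]
  | cons x t ih =>
    constructor
    · rintro ⟨h1, h2, h3⟩
      rw [ih] at h3
      obtain ⟨h4, h5⟩ := h3
      constructor
      · intro y hy
        rcases List.mem_cons.1 hy with rfl | hy
        · exact h1
        · exact h4 y hy
      · intro i hi
        cases i with
        | zero => simpa using h2
        | succ j =>
          have hj : j < t.length := by simpa using hi
          have := h5 j hj
          rw [foldr_max_init] at this
          simpa using this
    · rintro ⟨h1, h2⟩
      refine ⟨h1 x (by simp), by simpa using h2 0 (by simp), ?_⟩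
      rw [ih]
      refine ⟨fun y hy => h1 y (by simp [hy]), ?_⟩
      intro j hj
      have := h2 (j + 1) (by simpa using hj)
      rw [foldr_max_init]
      simpa using this

lemma isRGF_iff (w : List ℕ) : IsRGF w ↔ RGFAux 0 w := by
  rw [rgfAux_iff]
  unfold IsRGF
  cases w with
  | nil => simp
  | cons x t =>
    simp only [ne_eq, reduceCtorEq, not_false_eq_true, forall_const, List.getD_cons_zero]
    constructor
    · rintro ⟨h1, h2, h3⟩
      refine ⟨h1, ?_⟩
      intro i hi
      cases i with
      | zero => simp [h2]
      | succ j => exact h3 j hi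
    · rintro ⟨h1, h2⟩
      refine ⟨h1, ?_, fun j hj => h2 (j+1) hj⟩
      have := h2 0 (by simp)
      have := h1 x (by simp)
      simp at *
      omega

lemma iso_builder {a b c d p q r t : ℕ}
    (h : ∀ i j, i < 4 → j < 4 →
      ([a,b,c,d].getD i 0 < [a,b,c,d].getD j 0 ↔ [p,q,r,t].getD i 0 < [p,q,r,t].getD j 0)) :
    WordOrdIso [a,b,c,d] [p,q,r,t] := by
  refine ⟨rfl, ?_⟩
  intro i j hi hj
  exact h i j (by simpa using hi) (by simpa using hj)

lemma iso_1221 (a b : ℕ) (hab : a < b) : WordOrdIso [a,b,b,a] [1,2,2,1] := by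
  apply iso_builder; intro i j hi hj
  interval_cases i <;> interval_cases j <;> simp <;> omega

lemma iso_1232 (a b c : ℕ) (h1 : a < b) (h2 : b < c) : WordOrdIso [a,b,c,b] [1,2,3,2] := by
  apply iso_builder; intro i j hi hj
  interval_cases i <;> interval_cases j <;> simp <;> omega

lemma iso_1223 (a b c : ℕ) (h1 : a < b) (h2 : b < c) : WordOrdIso [a,b,b,c] [1,2,2,3] := by
  apply iso_builder; intro i j hi hj
  interval_cases i <;> interval_cases j <;> simp <;> omega

lemma len4_dest {s : List ℕ} (h : s.length = 4) : ∃ a b c d : ℕ, s = [a,b,c,d] := by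
  rcases s with _ | ⟨a, _ | ⟨b, _ | ⟨c, _ | ⟨d, _ | ⟨e, s⟩⟩⟩⟩⟩ <;> simp_all

lemma dest_1221 {s : List ℕ} (h : WordOrdIso s [1,2,2,1]) :
    ∃ a b, a < b ∧ s = [a,b,b,a] := by
  obtain ⟨a, b, c, d, rfl⟩ := len4_dest (by simpa using h.1)
  have h01 := h.2 0 1 (by simp) (by simp)
  have h12 := h.2 1 2 (by simp) (by simp)
  have h21 := h.2 2 1 (by simp) (by simp)
  have h03 := h.2 0 3 (by simp) (by simp)
  have h30 := h.2 3 0 (by simp) (by simp)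
  simp at h01 h12 h21 h03 h30
  have hc : c = b := by omega
  have hd : d = a := by omega
  subst hc hd
  exact ⟨_, _, h01, rfl⟩

lemma dest_1232 {s : List ℕ} (h : WordOrdIso s [1,2,3,2]) :
    ∃ a b c, a < b ∧ b < c ∧ s = [a,b,c,b] := by
  obtain ⟨a, b, c, d, rfl⟩ := len4_dest (by simpa using h.1)
  have h01 := h.2 0 1 (by simp) (by simp)
  have h12 := h.2 1 2 (by simp) (by simp)
  have h13 := h.2 1 3 (by simp) (by simp)
  have h31 := h.2 3 1 (by simp) (by simp)
  simp at h01 h12 h13 h31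
  have hd : d = b := by omega
  subst hd
  exact ⟨_, _, _, h01, h12, rfl⟩

lemma dest_1223 {s : List ℕ} (h : WordOrdIso s [1,2,2,3]) :
    ∃ a b c, a < b ∧ b < c ∧ s = [a,b,b,c] := by
  obtain ⟨a, b, c, d, rfl⟩ := len4_dest (by simpa using h.1)
  have h01 := h.2 0 1 (by simp) (by simp)
  have h12 := h.2 1 2 (by simp) (by simp)
  have h21 := h.2 2 1 (by simp) (by simp)
  have h23 := h.2 2 3 (by simp) (by simp)
  simp at h01 h12 h21 h23
  have hc : c = b := by omega
  subst hc
  exact ⟨_, _, _, h01, by omega, rfl⟩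

lemma RGFAux.prefix {u t : List ℕ} {m : ℕ} (h : RGFAux m (u ++ t)) : RGFAux m u := by
  induction u generalizing m with
  | nil => trivial
  | cons x u ih => exact ⟨h.1, h.2.1, ih h.2.2⟩

lemma cons_split {a : ℕ} {l w : List ℕ} (h : (a :: l).Sublist w) :
    ∃ u v, w = u ++ a :: v ∧ l.Sublist v := by
  rw [List.cons_sublist_iff] at h
  obtain ⟨r1, r2, rfl, hmem, hl⟩ := h
  obtain ⟨s, t, rfl⟩ := List.append_of_mem hmem
  exact ⟨s, t ++ r2, by simp, hl.trans (List.sublist_append_right _ _)⟩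

-- key: if [b, rest...] <+ w where w is an RGF, and a < b with 1 ≤ a,
-- then [a, b, rest...] <+ w
lemma prepend_small {b a : ℕ} {l w : List ℕ} (hw : RGFAux 0 w)
    (h : (b :: l).Sublist w) (ha : 1 ≤ a) (hab : a < b) :
    (a :: b :: l).Sublist w := by
  obtain ⟨u, v, rfl, hl⟩ := cons_split h
  have h2 : RGFAux (u.foldr max 0) (b :: v) := hw.append_right
  have hb : b ≤ u.foldr max 0 + 1 := h2.2.1
  have hmem : a ∈ u := RGFAux.mem_of_le hw.prefix (by omega) (by omega)
  have h3 : (a :: b :: l) = [a] ++ (b :: l) := rfl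
  rw [h3]
  exact List.Sublist.append (List.singleton_sublist.2 hmem) (hl.cons₂ _)

lemma contains_1221_iff {w : List ℕ} (hw : RGFAux 0 w) :
    PatContains w [1,2,2,1] ↔ ∃ a b, a < b ∧ ([b,b,a]).Sublist w := by
  constructor
  · rintro ⟨s, hsub, hiso⟩
    obtain ⟨a, b, hab, rfl⟩ := dest_1221 hiso
    exact ⟨a, b, hab, (List.sublist_cons_self _ _).trans hsub⟩
  · rintro ⟨a, b, hab, hsub⟩
    have ha : 1 ≤ a := hw.one_le a (hsub.subset (by simp))
    exact ⟨[a,b,b,a], prepend_small hw hsub ha hab, iso_1221 a b hab⟩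

lemma contains_1232_iff {w : List ℕ} (hw : RGFAux 0 w) :
    PatContains w [1,2,3,2] ↔ ∃ b c, 2 ≤ b ∧ b < c ∧ ([c,b]).Sublist w := by
  constructor
  · rintro ⟨s, hsub, hiso⟩
    obtain ⟨a, b, c, hab, hbc, rfl⟩ := dest_1232 hiso
    have ha : 1 ≤ a := hw.one_le a (hsub.subset (by simp))
    refine ⟨b, c, by omega, hbc, ?_⟩
    exact ((((List.Sublist.refl [c,b]).cons _).cons _)).trans hsub
  · rintro ⟨b, c, hb, hbc, hsub⟩
    have h1 : ([b,c,b]).Sublist w := prepend_small hw hsub (by omega) hbc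
    have h2 : ([1,b,c,b]).Sublist w := prepend_small hw h1 (by omega) (by omega)
    exact ⟨[1,b,c,b], h2, iso_1232 1 b c (by omega) hbc⟩

lemma contains_1223_iff {w : List ℕ} (hw : RGFAux 0 w) :
    PatContains w [1,2,2,3] ↔ ∃ b c, 2 ≤ b ∧ b < c ∧ ([b,b,c]).Sublist w := by
  constructor
  · rintro ⟨s, hsub, hiso⟩
    obtain ⟨a, b, c, hab, hbc, rfl⟩ := dest_1223 hiso
    have ha : 1 ≤ a := hw.one_le a (hsub.subset (by simp))
    refine ⟨b, c, by omega, hbc, (List.sublist_cons_self _ _).trans hsub⟩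
  · rintro ⟨b, c, hb, hbc, hsub⟩
    have h2 : ([1,b,b,c]).Sublist w := prepend_small hw hsub (by omega) (by omega)
    exact ⟨[1,b,b,c], h2, iso_1223 1 b c (by omega) hbc⟩


def finW : ℕ → ℕ → Finset (List ℕ)
  | _, 0 => {[]}
  | m, s+1 => ((finW m s).image (m :: ·)) ∪ ((finW (m+1) s).image ((m+1) :: ·))

def finB : ℕ → ℕ → Finset (List ℕ)
  | _, 0 => {[]}
  | m, s+1 => ((finB m s).image (1 :: ·)) ∪ ((finB (m+1) s).image ((m+1) :: ·))
      ∪ ((Finset.Icc 2 m).image (fun v => List.replicate (s+1) v))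

def finA : ℕ → ℕ → Finset (List ℕ)
  | _, 0 => {[]}
  | m, s+1 => ((finA m s).image (1 :: ·)) ∪ ((finA (m+1) s).image ((m+1) :: ·))
      ∪ (if 2 ≤ m then (finW m s).image (m :: ·) else ∅)

lemma card_image_cons (F : Finset (List ℕ)) (a : ℕ) :
    (F.image (a :: ·)).card = F.card :=
  Finset.card_image_of_injective _ (fun x y h => by simpa using h)

lemma disj_cons_cons (F G : Finset (List ℕ)) {a b : ℕ} (hab : a ≠ b) :
    Disjoint (F.image (a :: ·)) (G.image (b :: ·)) := by
  rw [Finset.disjoint_left]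
  rintro w hw hw'
  simp only [Finset.mem_image] at hw hw'
  obtain ⟨x, _, rfl⟩ := hw
  obtain ⟨y, _, h⟩ := hw'
  simp at h
  exact hab h.1.symm

lemma disj_cons_rep (F : Finset (List ℕ)) {a s m : ℕ} (ha : a < 2 ∨ m < a) :
    Disjoint (F.image (a :: ·)) ((Finset.Icc 2 m).image (fun v => List.replicate (s+1) v)) := by
  rw [Finset.disjoint_left]
  rintro w hw hw'
  simp only [Finset.mem_image] at hw hw'
  obtain ⟨x, _, rfl⟩ := hw
  obtain ⟨y, hy, h⟩ := hw'
  simp only [Finset.mem_Icc] at hy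
  rw [List.replicate_succ] at h
  simp only [List.cons.injEq] at h
  omega

lemma card_finW (s m : ℕ) : (finW m s).card = 2 ^ s := by
  induction s generalizing m with
  | zero => simp [finW]
  | succ s ih =>
    rw [finW, Finset.card_union_of_disjoint (disj_cons_cons _ _ (by omega)),
      card_image_cons, card_image_cons, ih, ih]
    ring

lemma card_finB (s k : ℕ) :
    2 * (finB (k+1) s).card + 2 * k = s * 2 ^ s + 2 + k * 2 ^ (s+1) := by
  induction s generalizing k with
  | zero => simp [finB]; ring
  | succ s ih =>
    have hrep : ((Finset.Icc 2 (k+1)).image (fun v => List.replicate (s+1) v)).card = k := by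
      rw [Finset.card_image_of_injOn, Nat.card_Icc]
      · omega
      · intro x _ y _ h
        have h' : List.replicate (s+1) x = List.replicate (s+1) y := h
        rw [List.replicate_succ, List.replicate_succ] at h'
        exact (List.cons.inj h').1
    have hcard : (finB (k+1) (s+1)).card
        = (finB (k+1) s).card + (finB (k+1+1) s).card + k := by
      rw [finB, Finset.card_union_of_disjoint
          (Finset.disjoint_union_left.2
            ⟨disj_cons_rep _ (by omega), disj_cons_rep _ (by omega)⟩),
        Finset.card_union_of_disjoint (disj_cons_cons _ _ (by omega)),
        card_image_cons, card_image_cons, hrep]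
    have i1 := ih k
    have i2 := ih (k+1)
    have e1 : k * 2^(s+1) = 2*(k*2^s) := by ring
    have e2 : (k+1) * 2^(s+1) = 2*(k*2^s) + 2*2^s := by ring
    have e3 : k * 2^(s+1+1) = 4*(k*2^s) := by ring
    have e4 : (s+1) * 2^(s+1) = 2*(s*2^s) + 2*2^s := by ring
    rw [hcard]
    omega

lemma card_finA_ge2 (s : ℕ) : ∀ m, 2 ≤ m → 2 * (finA m s).card = s * 2 ^ s + 2 ^ (s+1) := by
  induction s with
  | zero => intro m hm; simp [finA]
  | succ s ih =>
    intro m hm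
    have hcard : (finA m (s+1)).card
        = (finA m s).card + (finA (m+1) s).card + 2 ^ s := by
      rw [finA, if_pos hm, Finset.card_union_of_disjoint
          (Finset.disjoint_union_left.2
            ⟨disj_cons_cons _ _ (by omega), disj_cons_cons _ _ (by omega)⟩),
        Finset.card_union_of_disjoint (disj_cons_cons _ _ (by omega)),
        card_image_cons, card_image_cons, card_image_cons, card_finW]
    have i1 := ih m hm
    have i2 := ih (m+1) (by omega)
    have e1 : 2^(s+1) = 2*2^s := by ring
    have e2 : 2^(s+1+1) = 4*2^s := by ring
    have e4 : (s+1) * 2^(s+1) = 2*(s*2^s) + 2*2^s := by ring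
    rw [hcard]
    omega

lemma card_finA_one (s : ℕ) : 2 * (finA 1 s).card = s * 2 ^ s + 2 := by
  induction s with
  | zero => simp [finA]
  | succ s ih =>
    have hcard : (finA 1 (s+1)).card = (finA 1 s).card + (finA 2 s).card := by
      rw [finA, if_neg (by omega), Finset.union_empty,
        Finset.card_union_of_disjoint (disj_cons_cons _ _ (by omega)),
        card_image_cons, card_image_cons]
    have i2 := card_finA_ge2 s 2 (by omega)
    have e1 : 2^(s+1) = 2*2^s := by ring
    have e4 : (s+1) * 2^(s+1) = 2*(s*2^s) + 2*2^s := by ring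
    rw [hcard]
    omega

lemma pair_sublist_cons {x y a : ℕ} {t : List ℕ} (h : ([x,y]).Sublist (a :: t)) :
    ([x,y]).Sublist t ∨ (x = a ∧ y ∈ t) := by
  rw [List.sublist_cons_iff] at h
  rcases h with h | ⟨r, hr, hrt⟩
  · exact Or.inl h
  · obtain ⟨h1, h2⟩ := List.cons.inj hr
    exact Or.inr ⟨h1, by rw [← h2] at hrt; simpa using hrt⟩

lemma triple_sublist_cons {x y z a : ℕ} {t : List ℕ} (h : ([x,y,z]).Sublist (a :: t)) :
    ([x,y,z]).Sublist t ∨ (x = a ∧ ([y,z]).Sublist t) := by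
  rw [List.sublist_cons_iff] at h
  rcases h with h | ⟨r, hr, hrt⟩
  · exact Or.inl h
  · obtain ⟨h1, h2⟩ := List.cons.inj hr
    exact Or.inr ⟨h1, by rw [← h2] at hrt; exact hrt⟩

lemma rgfAux_replicate {k v m : ℕ} (h1 : 1 ≤ v) (h2 : v ≤ m + 1) :
    RGFAux m (List.replicate k v) := by
  induction k generalizing m with
  | zero => trivial
  | succ k ih =>
    rw [List.replicate_succ]
    exact ⟨h1, h2, ih (by omega)⟩

lemma finW_sound (s : ℕ) : ∀ m w, 1 ≤ m → w ∈ finW m s →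
    w.length = s ∧ RGFAux m w ∧ (∀ x ∈ w, m ≤ x) ∧
    (∀ x y, ([x,y]).Sublist w → x ≤ y) := by
  induction s with
  | zero =>
    intro m w _ hw
    simp [finW] at hw
    subst hw
    refine ⟨rfl, trivial, by simp, ?_⟩
    intro x y h
    exact absurd (h.length_le) (by simp)
  | succ s ih =>
    intro m w hm hw
    rw [finW, Finset.mem_union] at hw
    rcases hw with hw | hw <;> simp only [Finset.mem_image] at hw <;>
      obtain ⟨t, ht, rfl⟩ := hw
    · obtain ⟨hl, hr, hmem, hpair⟩ := ih m t hm ht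
      refine ⟨by simp [hl], ⟨by omega, by omega, by simpa [max_self] using hr⟩, ?_, ?_⟩
      · intro x hx
        rcases List.mem_cons.1 hx with rfl | hx
        · omega
        · exact hmem x hx
      · intro x y h
        rcases pair_sublist_cons h with h | ⟨rfl, hy⟩
        · exact hpair x y h
        · exact hmem y hy
    · obtain ⟨hl, hr, hmem, hpair⟩ := ih (m+1) t (by omega) ht
      have hmax : max m (m+1) = m+1 := by omega
      refine ⟨by simp [hl], ⟨by omega, by omega, by rw [hmax]; exact hr⟩, ?_, ?_⟩
      · intro x hx
        rcases List.mem_cons.1 hx with rfl | hx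
        · omega
        · have := hmem x hx; omega
      · intro x y h
        rcases pair_sublist_cons h with h | ⟨rfl, hy⟩
        · exact hpair x y h
        · have := hmem y hy; omega

lemma finB_sound (s : ℕ) : ∀ m w, 1 ≤ m → w ∈ finB m s →
    w.length = s ∧ RGFAux m w ∧
    (∀ b x, ([b,b,x]).Sublist w → 2 ≤ b → x = b) ∧
    (∀ v x, 2 ≤ v → v ≤ m → ([v,x]).Sublist w → x = v) := by
  induction s with
  | zero =>
    intro m w _ hw
    simp [finB] at hw
    subst hw
    refine ⟨rfl, trivial, ?_, ?_⟩
    · intro b x h _; exact absurd (h.length_le) (by simp)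
    · intro v x _ _ h; exact absurd (h.length_le) (by simp)
  | succ s ih =>
    intro m w hm hw
    rw [finB, Finset.mem_union, Finset.mem_union] at hw
    rcases hw with (hw | hw) | hw
    · simp only [Finset.mem_image] at hw
      obtain ⟨t, ht, rfl⟩ := hw
      obtain ⟨hl, hr, h3, h4⟩ := ih m t hm ht
      have hmax : max m 1 = m := by omega
      refine ⟨by simp [hl], ⟨by omega, by omega, by rw [hmax]; exact hr⟩, ?_, ?_⟩
      · intro b x h hb
        rcases triple_sublist_cons h with h | ⟨rfl, _⟩
        · exact h3 b x h hb
        · omega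
      · intro v x hv hvm h
        rcases pair_sublist_cons h with h | ⟨rfl, _⟩
        · exact h4 v x hv hvm h
        · omega
    · simp only [Finset.mem_image] at hw
      obtain ⟨t, ht, rfl⟩ := hw
      obtain ⟨hl, hr, h3, h4⟩ := ih (m+1) t (by omega) ht
      have hmax : max m (m+1) = m+1 := by omega
      refine ⟨by simp [hl], ⟨by omega, by omega, by rw [hmax]; exact hr⟩, ?_, ?_⟩
      · intro b x h hb
        rcases triple_sublist_cons h with h | ⟨rfl, hyz⟩
        · exact h3 b x h hb
        · exact h4 (m+1) x (by omega) (le_refl _) hyz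
      · intro v x hv hvm h
        rcases pair_sublist_cons h with h | ⟨rfl, _⟩
        · exact h4 v x hv (by omega) h
        · omega
    · simp only [Finset.mem_image, Finset.mem_Icc] at hw
      obtain ⟨v, ⟨hv2, hvm⟩, rfl⟩ := hw
      have hrep : ∀ x ∈ List.replicate (s+1) v, x = v := fun x hx =>
        List.eq_of_mem_replicate hx
      refine ⟨by simp, rgfAux_replicate (by omega) (by omega), ?_, ?_⟩
      · intro b x h _
        have hb := hrep b (h.subset (by simp))
        have hx := hrep x (h.subset (by simp))
        omega
      · intro u x _ _ h
        have hu := hrep u (h.subset (by simp))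
        have hx := hrep x (h.subset (by simp))
        omega

lemma finA_sound (s : ℕ) : ∀ m w, 1 ≤ m → w ∈ finA m s →
    w.length = s ∧ RGFAux m w ∧
    (∀ x ∈ w, 2 ≤ x → m ≤ x) ∧
    (∀ x y, ([x,y]).Sublist w → 2 ≤ y → x ≤ y) ∧
    (∀ b a, ([b,b,a]).Sublist w → 2 ≤ b → b ≤ a) ∧
    (∀ a, 2 ≤ m → ([m,a]).Sublist w → m ≤ a) := by
  induction s with
  | zero =>
    intro m w _ hw
    simp [finA] at hw
    subst hw
    refine ⟨rfl, trivial, by simp, ?_, ?_, ?_⟩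
    · intro x y h _; exact absurd (h.length_le) (by simp)
    · intro b a h _; exact absurd (h.length_le) (by simp)
    · intro a _ h; exact absurd (h.length_le) (by simp)
  | succ s ih =>
    intro m w hm hw
    rw [finA, Finset.mem_union, Finset.mem_union] at hw
    rcases hw with (hw | hw) | hw
    · simp only [Finset.mem_image] at hw
      obtain ⟨t, ht, rfl⟩ := hw
      obtain ⟨hl, hr, h3, h4, h5, h6⟩ := ih m t hm ht
      have hmax : max m 1 = m := by omega
      refine ⟨by simp [hl], ⟨by omega, by omega, by rw [hmax]; exact hr⟩, ?_, ?_, ?_, ?_⟩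
      · intro x hx h2
        rcases List.mem_cons.1 hx with rfl | hx
        · omega
        · exact h3 x hx h2
      · intro x y h hy
        rcases pair_sublist_cons h with h | ⟨rfl, _⟩
        · exact h4 x y h hy
        · omega
      · intro b a h hb
        rcases triple_sublist_cons h with h | ⟨rfl, _⟩
        · exact h5 b a h hb
        · omega
      · intro a hm2 h
        rcases pair_sublist_cons h with h | ⟨hm1, _⟩
        · exact h6 a hm2 h
        · omega
    · simp only [Finset.mem_image] at hw
      obtain ⟨t, ht, rfl⟩ := hw
      obtain ⟨hl, hr, h3, h4, h5, h6⟩ := ih (m+1) t (by omega) ht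
      have hmax : max m (m+1) = m+1 := by omega
      refine ⟨by simp [hl], ⟨by omega, by omega, by rw [hmax]; exact hr⟩, ?_, ?_, ?_, ?_⟩
      · intro x hx h2
        rcases List.mem_cons.1 hx with rfl | hx
        · omega
        · have := h3 x hx h2; omega
      · intro x y h hy
        rcases pair_sublist_cons h with h | ⟨rfl, hy'⟩
        · exact h4 x y h hy
        · have := h3 y hy' hy; omega
      · intro b a h hb
        rcases triple_sublist_cons h with h | ⟨rfl, hyz⟩
        · exact h5 b a h hb
        · exact h6 a (by omega) hyz
      · intro a hm2 h
        rcases pair_sublist_cons h with h | ⟨hm1, ha⟩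
        · have := h3 m (h.subset (by simp)) hm2; omega
        · omega
    · rcases Nat.lt_or_ge m 2 with hm2 | hm2
      · rw [if_neg (by omega)] at hw
        simp at hw
      · rw [if_pos hm2] at hw
        simp only [Finset.mem_image] at hw
        obtain ⟨t, ht, rfl⟩ := hw
        obtain ⟨hl, hr, h3, h4⟩ := finW_sound s m t (by omega) ht
        have hmax : max m m = m := by omega
        refine ⟨by simp [hl], ⟨by omega, by omega, by rw [hmax]; exact hr⟩, ?_, ?_, ?_, ?_⟩
        · intro x hx h2
          rcases List.mem_cons.1 hx with rfl | hx
          · omega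
          · exact h3 x hx
        · intro x y h hy
          rcases pair_sublist_cons h with h | ⟨rfl, hy'⟩
          · exact h4 x y h
          · exact h3 y hy'
        · intro b a h hb
          rcases triple_sublist_cons h with h | ⟨rfl, hyz⟩
          · exact (h4 b a ((List.sublist_cons_self _ _).trans h)).trans (le_refl _)
          · exact h3 a (hyz.subset (by simp))
        · intro a hm2' h
          rcases pair_sublist_cons h with h | ⟨_, ha⟩
          · exact h4 m a h
          · exact h3 a ha

lemma finW_complete (s : ℕ) : ∀ m w, 2 ≤ m → w.length = s → RGFAux m w →
    (∀ x ∈ w, m ≤ x) →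
    (∀ x y, ([x,y]).Sublist w → 2 ≤ y → x ≤ y) → w ∈ finW m s := by
  induction s with
  | zero =>
    intro m w _ hlen _ _ _
    rw [List.length_eq_zero_iff] at hlen
    simp [finW, hlen]
  | succ s ih =>
    intro m w hm hlen hr hmem hpair
    cases w with
    | nil => simp at hlen
    | cons x t =>
      obtain ⟨hx1, hx2, hx3⟩ := hr
      have hxm : m ≤ x := hmem x (by simp)
      rw [finW, Finset.mem_union]
      rcases Nat.eq_or_lt_of_le hxm with rfl | hx
      · left
        rw [Finset.mem_image]
        refine ⟨t, ih _ t hm (by simpa using hlen) (by simpa [max_self] using hx3) ?_ ?_, rfl⟩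
        · intro y hy
          exact hmem y (by simp [hy])
        · intro a b h h2
          exact hpair a b (h.cons _) h2
      · have hx' : x = m + 1 := by omega
        subst hx'
        right
        rw [Finset.mem_image]
        have hmax : max m (m+1) = m+1 := by omega
        refine ⟨t, ih (m+1) t (by omega) (by simpa using hlen)
          (by rw [hmax] at hx3; exact hx3) ?_ ?_, rfl⟩
        · intro y hy
          have h1 : m ≤ y := hmem y (by simp [hy])
          have : ([m+1, y]).Sublist ((m+1) :: t) := (List.singleton_sublist.2 hy).cons₂ _
          exact hpair _ _ this (by omega)
        · intro a b h h2
          exact hpair a b (h.cons _) h2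

lemma finB_complete (s : ℕ) : ∀ m w, 1 ≤ m → w.length = s → RGFAux m w →
    (∀ b x, ([b,b,x]).Sublist w → 2 ≤ b → x = b) →
    (∀ v x, 2 ≤ v → v ≤ m → ([v,x]).Sublist w → x = v) → w ∈ finB m s := by
  induction s with
  | zero =>
    intro m w _ hlen _ _ _
    rw [List.length_eq_zero_iff] at hlen
    simp [finB, hlen]
  | succ s ih =>
    intro m w hm hlen hr h3 h4
    cases w with
    | nil => simp at hlen
    | cons x t =>
      obtain ⟨hx1, hx2, hx3⟩ := hr
      rw [finB, Finset.mem_union, Finset.mem_union]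
      rcases Nat.lt_or_ge x 2 with hx | hx
      · -- x = 1
        have hx' : x = 1 := by omega
        subst hx'
        left; left
        rw [Finset.mem_image]
        have hmax : max m 1 = m := by omega
        refine ⟨t, ih m t hm (by simpa using hlen) (by rw [hmax] at hx3; exact hx3) ?_ ?_, rfl⟩
        · intro b y h hb
          exact h3 b y (h.cons _) hb
        · intro v y hv hvm h
          exact h4 v y hv hvm (h.cons _)
      · rcases Nat.lt_or_ge x (m+1) with hxm | hxm
        · -- 2 ≤ x ≤ m : constant tail
          right
          rw [Finset.mem_image]
          refine ⟨x, Finset.mem_Icc.2 ⟨hx, by omega⟩, ?_⟩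
          have ht : t = List.replicate s x := by
            have : ∀ y ∈ t, y = x := by
              intro y hy
              exact h4 x y hx (by omega) ((List.singleton_sublist.2 hy).cons₂ _)
            rw [List.eq_replicate_of_mem this]
            congr 1
            simpa using hlen
          rw [List.replicate_succ, ht]
        · -- x = m+1
          have hx' : x = m + 1 := by omega
          subst hx'
          left; right
          rw [Finset.mem_image]
          have hmax : max m (m+1) = m+1 := by omega
          refine ⟨t, ih (m+1) t (by omega) (by simpa using hlen)
            (by rw [hmax] at hx3; exact hx3) ?_ ?_, rfl⟩
          · intro b y h hb
            exact h3 b y (h.cons _) hb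
          · intro v y hv hvm h
            rcases Nat.lt_or_ge v (m+1) with hv' | hv'
            · exact h4 v y hv (by omega) (h.cons _)
            · have hveq : v = m + 1 := by omega
              subst hveq
              exact h3 (m+1) y (h.cons₂ _) (by omega)

lemma finA_complete (s : ℕ) : ∀ m w, 1 ≤ m → w.length = s → RGFAux m w →
    (∀ x ∈ w, 2 ≤ x → m ≤ x) →
    (∀ x y, ([x,y]).Sublist w → 2 ≤ y → x ≤ y) →
    (∀ b a, ([b,b,a]).Sublist w → 2 ≤ b → b ≤ a) →
    (∀ a, 2 ≤ m → ([m,a]).Sublist w → m ≤ a) → w ∈ finA m s := by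
  induction s with
  | zero =>
    intro m w _ hlen _ _ _ _ _
    rw [List.length_eq_zero_iff] at hlen
    simp [finA, hlen]
  | succ s ih =>
    intro m w hm hlen hr h3 h4 h5 h6
    cases w with
    | nil => simp at hlen
    | cons x t =>
      obtain ⟨hx1, hx2, hx3⟩ := hr
      rw [finA, Finset.mem_union, Finset.mem_union]
      rcases Nat.lt_or_ge x 2 with hx | hx
      · -- x = 1
        have hx' : x = 1 := by omega
        subst hx'
        left; left
        rw [Finset.mem_image]
        have hmax : max m 1 = m := by omega
        refine ⟨t, ih m t hm (by simpa using hlen) (by rw [hmax] at hx3; exact hx3)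
          ?_ ?_ ?_ ?_, rfl⟩
        · intro y hy h2
          exact h3 y (by simp [hy]) h2
        · intro a b h h2
          exact h4 a b (h.cons _) h2
        · intro b a h hb
          exact h5 b a (h.cons _) hb
        · intro a hm2 h
          exact h6 a hm2 (h.cons _)
      · rcases Nat.lt_or_ge x (m+1) with hxm | hxm
        · -- 2 ≤ x ≤ m, so x = m (from h3) and 2 ≤ m
          have hxeq : x = m := by
            have := h3 x (by simp) hx
            omega
          subst hxeq
          have hm2 : 2 ≤ x := hx
          right
          rw [if_pos hm2, Finset.mem_image]
          refine ⟨t, finW_complete s x t hm2 (by simpa using hlen)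
            (by simpa [max_self] using hx3) ?_ ?_, rfl⟩
          · intro y hy
            exact h6 y hm2 ((List.singleton_sublist.2 hy).cons₂ _)
          · intro a b h h2
            exact h4 a b (h.cons _) h2
        · -- x = m+1
          have hx' : x = m + 1 := by omega
          subst hx'
          left; right
          rw [Finset.mem_image]
          have hmax : max m (m+1) = m+1 := by omega
          refine ⟨t, ih (m+1) t (by omega) (by simpa using hlen)
            (by rw [hmax] at hx3; exact hx3) ?_ ?_ ?_ ?_, rfl⟩
          · intro y hy h2
            exact h4 (m+1) y ((List.singleton_sublist.2 hy).cons₂ _) h2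
          · intro a b h h2
            exact h4 a b (h.cons _) h2
          · intro b a h hb
            exact h5 b a (h.cons _) hb
          · intro a _ h
            exact h5 (m+1) a (h.cons₂ _) (by omega)


lemma head_one {w : List ℕ} (h : RGFAux 0 w) (hne : w ≠ []) : ∃ t, w = 1 :: t := by
  cases w with
  | nil => exact absurd rfl hne
  | cons x t =>
    have h1 := h.1
    have h2 := h.2.1
    have hx : x = 1 := by omega
    exact ⟨t, by rw [hx]⟩

lemma setB_eq (n : ℕ) (hn : 2 ≤ n) :
    {w : List ℕ | IsRGF w ∧ w.length = n ∧
      ∀ p ∈ ({[1,2,2,1], [1,2,2,3]} : Set (List ℕ)), PatAvoids w p}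
    = ↑((finB 1 (n-1)).image (1 :: ·)) := by
  ext w
  simp only [Set.mem_setOf_eq, Finset.coe_image, Set.mem_image, Finset.mem_coe]
  constructor
  · rintro ⟨hrgf, hlen, havoid⟩
    have h1221 : PatAvoids w [1,2,2,1] := havoid _ (by simp)
    have h1223 : PatAvoids w [1,2,2,3] := havoid _ (by simp)
    rw [isRGF_iff] at hrgf
    have hne : w ≠ [] := by
      intro h; rw [h] at hlen; simp at hlen; omega
    obtain ⟨t, rfl⟩ := head_one hrgf hne
    have hrt : RGFAux 1 t := by
      have := hrgf.2.2
      rwa [show max 0 1 = 1 from rfl] at this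
    refine ⟨t, ?_, rfl⟩
    apply finB_complete (n-1) 1 t le_rfl (by simp at hlen; omega) hrt
    · intro b x h hb
      by_contra hne'
      rcases Nat.lt_or_ge x b with hlt | hge
      · exact h1221 ((contains_1221_iff hrgf).2 ⟨x, b, hlt, h.cons _⟩)
      · exact h1223 ((contains_1223_iff hrgf).2 ⟨b, x, hb, by omega, h.cons _⟩)
    · intro v x hv hvm h
      omega
  · rintro ⟨t, ht, rfl⟩
    obtain ⟨hlen, hrt, h3, h4⟩ := finB_sound (n-1) 1 t le_rfl ht
    have hrgf : RGFAux 0 (1 :: t) :=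
      ⟨le_rfl, by omega, by rw [show max 0 1 = 1 from rfl]; exact hrt⟩
    refine ⟨(isRGF_iff _).2 hrgf, by simp [hlen]; omega, ?_⟩
    intro p hp
    simp only [Set.mem_insert_iff, Set.mem_singleton_iff] at hp
    rcases hp with rfl | rfl
    · intro hc
      obtain ⟨a, b, hab, hsub⟩ := (contains_1221_iff hrgf).1 hc
      have ha1 : 1 ≤ a := hrgf.one_le a (hsub.subset (by simp))
      rcases triple_sublist_cons hsub with h | ⟨hb1, _⟩
      · have := h3 b a h (by omega); omega
      · omega
    · intro hc
      obtain ⟨b, c, hb, hbc, hsub⟩ := (contains_1223_iff hrgf).1 hc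
      rcases triple_sublist_cons hsub with h | ⟨hb1, _⟩
      · have := h3 b c h hb; omega
      · omega

lemma setA_eq (n : ℕ) (hn : 2 ≤ n) :
    {w : List ℕ | IsRGF w ∧ w.length = n ∧
      ∀ p ∈ ({[1,2,2,1], [1,2,3,2]} : Set (List ℕ)), PatAvoids w p}
    = ↑((finA 1 (n-1)).image (1 :: ·)) := by
  ext w
  simp only [Set.mem_setOf_eq, Finset.coe_image, Set.mem_image, Finset.mem_coe]
  constructor
  · rintro ⟨hrgf, hlen, havoid⟩
    have h1221 : PatAvoids w [1,2,2,1] := havoid _ (by simp)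
    have h1232 : PatAvoids w [1,2,3,2] := havoid _ (by simp)
    rw [isRGF_iff] at hrgf
    have hne : w ≠ [] := by
      intro h; rw [h] at hlen; simp at hlen; omega
    obtain ⟨t, rfl⟩ := head_one hrgf hne
    have hrt : RGFAux 1 t := by
      have := hrgf.2.2
      rwa [show max 0 1 = 1 from rfl] at this
    refine ⟨t, ?_, rfl⟩
    apply finA_complete (n-1) 1 t le_rfl (by simp at hlen; omega) hrt
    · intro x _ _; omega
    · intro x y h hy
      by_contra hne'
      exact h1232 ((contains_1232_iff hrgf).2 ⟨y, x, hy, by omega, h.cons _⟩)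
    · intro b a h hb
      by_contra hne'
      exact h1221 ((contains_1221_iff hrgf).2 ⟨a, b, by omega, h.cons _⟩)
    · intro a hm2 _
      omega
  · rintro ⟨t, ht, rfl⟩
    obtain ⟨hlen, hrt, h3, h4, h5, h6⟩ := finA_sound (n-1) 1 t le_rfl ht
    have hrgf : RGFAux 0 (1 :: t) :=
      ⟨le_rfl, by omega, by rw [show max 0 1 = 1 from rfl]; exact hrt⟩
    refine ⟨(isRGF_iff _).2 hrgf, by simp [hlen]; omega, ?_⟩
    intro p hp
    simp only [Set.mem_insert_iff, Set.mem_singleton_iff] at hp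
    rcases hp with rfl | rfl
    · intro hc
      obtain ⟨a, b, hab, hsub⟩ := (contains_1221_iff hrgf).1 hc
      have ha1 : 1 ≤ a := hrgf.one_le a (hsub.subset (by simp))
      rcases triple_sublist_cons hsub with h | ⟨hb1, _⟩
      · have := h5 b a h (by omega); omega
      · omega
    · intro hc
      obtain ⟨b, c, hb, hbc, hsub⟩ := (contains_1232_iff hrgf).1 hc
      rcases pair_sublist_cons hsub with h | ⟨hc1, _⟩
      · have := h4 c b h hb; omega
      · omega

/-- Proposition 4.16: `p_n(1221,1232) = p_n(1221,1223) = 1 + (n-1)·2^{n-2}`. -/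
theorem stmt18 :
    ∀ n : ℕ, 2 ≤ n →
      pCount n {[1,2,2,1], [1,2,3,2]} = 1 + (n - 1) * 2 ^ (n - 2) ∧
      pCount n {[1,2,2,1], [1,2,2,3]} = 1 + (n - 1) * 2 ^ (n - 2) := by
  intro n hn
  have hpow : 2 ^ (n-1) = 2 * 2 ^ (n-2) := by
    rw [show n - 1 = (n-2) + 1 from by omega, pow_succ]
    ring
  have e : (n-1) * 2 ^ (n-1) = 2 * ((n-1) * 2 ^ (n-2)) := by
    rw [hpow]; ring
  constructor
  · have hA := setA_eq n hn
    unfold pCount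
    rw [hA, Set.ncard_coe_finset, card_image_cons]
    have h1 := card_finA_one (n-1)
    omega
  · have hB := setB_eq n hn
    unfold pCount
    rw [hB, Set.ncard_coe_finset, card_image_cons]
    have h1 := card_finB (n-1) 0
    simp only [Nat.zero_add, Nat.mul_zero, Nat.add_zero, Nat.zero_mul] at h1
    omega
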